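/- arXiv:2601.07406 — 2 statements merged into one kernel-verified Lean document; each statement's English description precedes it below -/
import Mathlib

section
/- Let G1, G2 be graphs and define S_s(G) = max{t ∈ ℕ : K_{s,t} ⊆ G} (with max ∅ = -∞, and S_0(G) = |G|). Then for the join G1 × G2 and any s ≥ 0: S_s(G1 × G2) = max over a + c = s of (S_a(G1) + S_c(G2)). -/
open SimpleGraph

/-- The join (product) of two graphs: disjoint union plus all cross edges. -/
def gJoin {α β : Type*} (G : SimpleGraph α) (H : SimpleGraph β) : SimpleGraph (α ⊕ β) where
  Adj u v := match u, v with
    | Sum.inl a, Sum.inl b => G.Adj a b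
    | Sum.inr a, Sum.inr b => H.Adj a b
    | _, _ => True
  symm := by constructor; rintro (a|a) (b|b) h <;> simp_all <;> exact h.symm
  loopless := by
    constructor
    rintro (a|a) h
    · exact G.loopless.irrefl a h
    · exact H.loopless.irrefl a h

/-- `H` is contained in `G` as a (not necessarily induced) subgraph. -/
def Contains {β α : Type*} (H : SimpleGraph β) (G : SimpleGraph α) : Prop :=
  ∃ f : H →g G, Function.Injective f

/-- The complete bipartite graph `K_{s,t}`. -/
def KBip (s t : ℕ) : SimpleGraph (Fin s ⊕ Fin t) := completeBipartiteGraph (Fin s) (Fin t)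

/-- A cograph: a graph with no induced path on four vertices. -/
def IsCograph {α : Type*} (G : SimpleGraph α) : Prop :=
  IsEmpty (pathGraph 4 ↪g G)

/-- The biclique-sequence: the largest t with K_{s,t} ⊆ G, or ⊥ (= -∞) if none. -/
noncomputable def bicliqueSeq {α : Type*} (G : SimpleGraph α) (s : ℕ) : WithBot ℕ :=
  sSup {x : WithBot ℕ | ∃ t : ℕ, x = (t : WithBot ℕ) ∧ Contains (KBip s t) G}

lemma contains_iff {α : Type*} (G : SimpleGraph α) (s t : ℕ) :
    Contains (KBip s t) G ↔ ∃ A B : Finset α, Disjoint A B ∧ A.card = s ∧ B.card = t ∧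
      ∀ a ∈ A, ∀ b ∈ B, G.Adj a b := by
  classical
  constructor
  · rintro ⟨f, hf⟩
    refine ⟨Finset.univ.image (fun i : Fin s => f (Sum.inl i)),
      Finset.univ.image (fun j : Fin t => f (Sum.inr j)), ?_, ?_, ?_, ?_⟩
    · rw [Finset.disjoint_left]
      rintro x hx hy
      simp only [Finset.mem_image, Finset.mem_univ, true_and] at hx hy
      obtain ⟨i, hi⟩ := hx; obtain ⟨j, hj⟩ := hy
      exact absurd (hf (hi.trans hj.symm)) (by simp)
    · rw [Finset.card_image_of_injective _ (fun i j h => Sum.inl.inj (hf h))]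
      simp
    · rw [Finset.card_image_of_injective _ (fun i j h => Sum.inr.inj (hf h))]
      simp
    · rintro a ha b hb
      simp only [Finset.mem_image, Finset.mem_univ, true_and] at ha hb
      obtain ⟨i, hi⟩ := ha; obtain ⟨j, hj⟩ := hb
      subst hi hj
      exact f.map_adj (by simp [KBip])
  · rintro ⟨A, B, hAB, hA, hB, hadj⟩
    have eA := A.equivFinOfCardEq hA
    have eB := B.equivFinOfCardEq hB
    have hinj : Function.Injective
        (Sum.elim (fun i : Fin s => (eA.symm i : α)) (fun j : Fin t => (eB.symm j : α))) := by
      rintro (i|i) (j|j) h <;> simp only [Sum.elim_inl, Sum.elim_inr] at h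
      · exact congrArg Sum.inl (eA.symm.injective (Subtype.ext h))
      · exact absurd hAB (by
          rw [Finset.not_disjoint_iff]
          exact ⟨_, (eA.symm i).2, h ▸ (eB.symm j).2⟩)
      · exact absurd hAB (by
          rw [Finset.not_disjoint_iff]
          exact ⟨_, (eA.symm j).2, h ▸ (eB.symm i).2⟩)
      · exact congrArg Sum.inr (eB.symm.injective (Subtype.ext h))
    refine ⟨⟨Sum.elim (fun i => (eA.symm i : α)) (fun j => (eB.symm j : α)), ?_⟩, hinj⟩
    rintro (i|i) (j|j) h
    · exact absurd h (by simp [KBip])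
    · exact hadj _ (eA.symm i).2 _ (eB.symm j).2
    · exact (hadj _ (eA.symm j).2 _ (eB.symm i).2).symm
    · exact absurd h (by simp [KBip])

lemma contains_join_iff {α β : Type*} (G1 : SimpleGraph α) (G2 : SimpleGraph β) (s t : ℕ) :
    Contains (KBip s t) (gJoin G1 G2) ↔
      ∃ a b c d : ℕ, a + c = s ∧ b + d = t ∧ Contains (KBip a b) G1 ∧ Contains (KBip c d) G2 := by
  classical
  constructor
  · rw [contains_iff]
    rintro ⟨A, B, hAB, hA, hB, hadj⟩
    refine ⟨A.toLeft.card, B.toLeft.card, A.toRight.card, B.toRight.card, ?_, ?_, ?_, ?_⟩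
    · rw [Finset.card_toLeft_add_card_toRight, hA]
    · rw [Finset.card_toLeft_add_card_toRight, hB]
    · rw [contains_iff]
      refine ⟨A.toLeft, B.toLeft, ?_, rfl, rfl, ?_⟩
      · rw [Finset.disjoint_left] at hAB ⊢
        intro x hx hy
        rw [Finset.mem_toLeft] at hx hy
        exact hAB hx hy
      · intro x hx y hy
        rw [Finset.mem_toLeft] at hx hy
        exact hadj _ hx _ hy
    · rw [contains_iff]
      refine ⟨A.toRight, B.toRight, ?_, rfl, rfl, ?_⟩
      · rw [Finset.disjoint_left] at hAB ⊢
        intro x hx hy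
        rw [Finset.mem_toRight] at hx hy
        exact hAB hx hy
      · intro x hx y hy
        rw [Finset.mem_toRight] at hx hy
        exact hadj _ hx _ hy
  · rintro ⟨a, b, c, d, hac, hbd, h1, h2⟩
    rw [contains_iff] at h1 h2 ⊢
    obtain ⟨A1, B1, hd1, hA1, hB1, hadj1⟩ := h1
    obtain ⟨A2, B2, hd2, hA2, hB2, hadj2⟩ := h2
    refine ⟨A1.disjSum A2, B1.disjSum B2, ?_, ?_, ?_, ?_⟩
    · rw [Finset.disjoint_left]
      rintro (x|x) hx hy
      · rw [Finset.inl_mem_disjSum] at hx hy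
        exact Finset.disjoint_left.mp hd1 hx hy
      · rw [Finset.inr_mem_disjSum] at hx hy
        exact Finset.disjoint_left.mp hd2 hx hy
    · rw [Finset.card_disjSum, hA1, hA2, hac]
    · rw [Finset.card_disjSum, hB1, hB2, hbd]
    · rintro (x|x) hx (y|y) hy
      · exact hadj1 _ (Finset.inl_mem_disjSum.mp hx) _ (Finset.inl_mem_disjSum.mp hy)
      · trivial
      · trivial
      · exact hadj2 _ (Finset.inr_mem_disjSum.mp hx) _ (Finset.inr_mem_disjSum.mp hy)

lemma contains_t_le {α : Type*} [Fintype α] {G : SimpleGraph α} {s t : ℕ}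
    (h : Contains (KBip s t) G) : t ≤ Fintype.card α := by
  rw [contains_iff] at h
  obtain ⟨A, B, _, _, hB, _⟩ := h
  exact hB ▸ Finset.card_le_univ B

lemma bseq_set_eq {α : Type*} (G : SimpleGraph α) (a : ℕ) :
    {x : WithBot ℕ | ∃ t : ℕ, x = (t : WithBot ℕ) ∧ Contains (KBip a t) G} =
      (fun t : ℕ => (t : WithBot ℕ)) '' {t : ℕ | Contains (KBip a t) G} := by
  ext x
  simp only [Set.mem_setOf_eq, Set.mem_image]
  constructor
  · rintro ⟨t, rfl, ht⟩; exact ⟨t, ht, rfl⟩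
  · rintro ⟨t, ht, rfl⟩; exact ⟨t, rfl, ht⟩

lemma bseq_bddAbove {α : Type*} [Fintype α] (G : SimpleGraph α) (a : ℕ) :
    BddAbove {x : WithBot ℕ | ∃ t : ℕ, x = (t : WithBot ℕ) ∧ Contains (KBip a t) G} := by
  refine ⟨(Fintype.card α : WithBot ℕ), ?_⟩
  rintro x ⟨t, rfl, ht⟩
  exact_mod_cast contains_t_le ht

lemma le_bseq {α : Type*} [Fintype α] {G : SimpleGraph α} {a t : ℕ}
    (h : Contains (KBip a t) G) : (t : WithBot ℕ) ≤ bicliqueSeq G a :=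
  le_csSup (bseq_bddAbove G a) ⟨t, rfl, h⟩

lemma bseq_spec {α : Type*} [Fintype α] (G : SimpleGraph α) (a : ℕ) :
    bicliqueSeq G a = ⊥ ∨ ∃ t : ℕ, bicliqueSeq G a = (t : WithBot ℕ) ∧ Contains (KBip a t) G := by
  set T := {t : ℕ | Contains (KBip a t) G} with hT
  by_cases hne : T.Nonempty
  · right
    have hbdd : BddAbove T := ⟨Fintype.card α, fun t ht => contains_t_le ht⟩
    refine ⟨sSup T, ?_, Nat.sSup_mem hne hbdd⟩
    rw [bicliqueSeq, bseq_set_eq, ← hT]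
    exact (WithBot.coe_sSup' hne hbdd).symm
  · left
    rw [bicliqueSeq, bseq_set_eq, ← hT, Set.not_nonempty_iff_eq_empty.mp hne]
    simp [WithBot.sSup_empty]

lemma bseq_le_card {α : Type*} [Fintype α] (G : SimpleGraph α) (a : ℕ) :
    bicliqueSeq G a ≤ (Fintype.card α : WithBot ℕ) := by
  rcases bseq_spec G a with h | ⟨t, ht, hc⟩
  · simp [h]
  · rw [ht]; exact_mod_cast contains_t_le hc

theorem bicliqueSeq_join {α β : Type*} [Fintype α] [Fintype β]
    (G1 : SimpleGraph α) (G2 : SimpleGraph β) (s : ℕ) :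
    bicliqueSeq (gJoin G1 G2) s =
      sSup {x : WithBot ℕ | ∃ a c : ℕ, a + c = s ∧ x = bicliqueSeq G1 a + bicliqueSeq G2 c} := by
  have hRbdd : BddAbove
      {x : WithBot ℕ | ∃ a c : ℕ, a + c = s ∧ x = bicliqueSeq G1 a + bicliqueSeq G2 c} := by
    refine ⟨((Fintype.card α + Fintype.card β : ℕ) : WithBot ℕ), ?_⟩
    rintro x ⟨a, c, -, rfl⟩
    calc bicliqueSeq G1 a + bicliqueSeq G2 c
        ≤ (Fintype.card α : WithBot ℕ) + (Fintype.card β : WithBot ℕ) :=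
          add_le_add (bseq_le_card G1 a) (bseq_le_card G2 c)
      _ = ((Fintype.card α + Fintype.card β : ℕ) : WithBot ℕ) := by push_cast; ring
  apply le_antisymm
  · rcases Set.eq_empty_or_nonempty
        {x : WithBot ℕ | ∃ t : ℕ, x = (t : WithBot ℕ) ∧ Contains (KBip s t) (gJoin G1 G2)} with
      he | hne
    · rw [bicliqueSeq, he, WithBot.sSup_empty]
      exact bot_le
    · rw [bicliqueSeq]
      apply csSup_le hne
      rintro x ⟨t, rfl, hcont⟩
      obtain ⟨a, b, c, d, hac, hbd, h1, h2⟩ := (contains_join_iff G1 G2 s t).mp hcont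
      have : (t : WithBot ℕ) ≤ bicliqueSeq G1 a + bicliqueSeq G2 c := by
        calc (t : WithBot ℕ) = ((b + d : ℕ) : WithBot ℕ) := by rw [hbd]
          _ = (b : WithBot ℕ) + (d : WithBot ℕ) := by push_cast; ring
          _ ≤ bicliqueSeq G1 a + bicliqueSeq G2 c := add_le_add (le_bseq h1) (le_bseq h2)
      exact this.trans (le_csSup hRbdd ⟨a, c, hac, rfl⟩)
  · have hRne : Set.Nonempty
        {x : WithBot ℕ | ∃ a c : ℕ, a + c = s ∧ x = bicliqueSeq G1 a + bicliqueSeq G2 c} :=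
      ⟨bicliqueSeq G1 s + bicliqueSeq G2 0, ⟨s, 0, by simp, rfl⟩⟩
    apply csSup_le hRne
    rintro x ⟨a, c, hac, rfl⟩
    rcases bseq_spec G1 a with h1 | ⟨b, hb, hcb⟩
    · rw [h1]; simp
    rcases bseq_spec G2 c with h2 | ⟨d, hd, hcd⟩
    · rw [h2]; simp
    rw [hb, hd]
    have hcont : Contains (KBip s (b + d)) (gJoin G1 G2) :=
      (contains_join_iff G1 G2 s (b + d)).mpr ⟨a, b, c, d, hac, rfl, hcb, hcd⟩
    calc (b : WithBot ℕ) + (d : WithBot ℕ) = ((b + d : ℕ) : WithBot ℕ) := by push_cast; ring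
      _ ≤ bicliqueSeq (gJoin G1 G2) s := le_bseq hcont
end

section
/- For every even natural number n and every d with 0 ≤ d < n, there exists a d-regular cograph on n vertices. -/
open SimpleGraph

/-! ### Auxiliary material -/

/-- Disjoint union of graphs. -/
def gSum {α β : Type*} (G : SimpleGraph α) (H : SimpleGraph β) : SimpleGraph (α ⊕ β) where
  Adj u v := match u, v with
    | Sum.inl a, Sum.inl b => G.Adj a b
    | Sum.inr a, Sum.inr b => H.Adj a b
    | _, _ => False
  symm := by constructor; rintro (a|a) (b|b) h <;> simp_all <;> exact h.symm
  loopless := by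
    constructor
    rintro (a|a) h
    · exact G.loopless.irrefl a h
    · exact H.loopless.irrefl a h

lemma gSum_eq {α β : Type*} (G : SimpleGraph α) (H : SimpleGraph β) :
    gSum G H = (gJoin Gᶜ Hᶜ)ᶜ := by
  ext u v
  rcases u with a | a <;> rcases v with b | b <;>
    simp only [gSum, gJoin, compl_adj] <;> constructor
  · intro h; exact ⟨by simp [G.ne_of_adj h], fun hc => hc.2 h⟩
  · intro h; by_contra hc; exact h.2 ⟨by simpa using h.1, hc⟩
  · intro h; exact h.elim
  · intro h; exact h.2 trivial
  · intro h; exact h.elim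
  · intro h; exact h.2 trivial
  · intro h; exact ⟨by simp [H.ne_of_adj h], fun hc => hc.2 h⟩
  · intro h; by_contra hc; exact h.2 ⟨by simpa using h.1, hc⟩

lemma isCograph_of_iso {α β : Type*} {G : SimpleGraph α} {H : SimpleGraph β}
    (e : G ≃g H) (h : IsCograph G) : IsCograph H := by
  constructor
  intro f
  exact h.elim (e.symm.toEmbedding.comp f)

/-- complement embedding -/
def embCompl {α β : Type*} {G : SimpleGraph α} {H : SimpleGraph β}
    (f : G ↪g H) : Gᶜ ↪g Hᶜ :=
  ⟨f.toEmbedding, by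
    intro a b
    simp [compl_adj, f.map_adj_iff, f.toEmbedding.apply_eq_iff_eq]⟩

/-- The path graph on 4 vertices is isomorphic to its complement. -/
def p4SelfCompl : pathGraph 4 ≃g (pathGraph 4)ᶜ := by
  refine ⟨⟨![1, 3, 0, 2], ![2, 0, 3, 1], by decide, by decide⟩, ?_⟩
  intro a b
  simp only [compl_adj, pathGraph_adj]
  revert a b; decide

lemma IsCograph.compl {α : Type*} {G : SimpleGraph α} (h : IsCograph G) : IsCograph Gᶜ := by
  constructor
  intro f
  have f' : (pathGraph 4)ᶜ ↪g Gᶜᶜ := embCompl f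
  rw [compl_compl] at f'
  exact h.elim (f'.comp p4SelfCompl.toEmbedding)

lemma isCograph_top {α : Type*} : IsCograph (⊤ : SimpleGraph α) := by
  constructor
  intro f
  have h02 : (pathGraph 4).Adj 0 2 := by
    refine f.map_adj_iff.mp ?_
    simp only [top_adj]
    exact fun hc => by
      have := f.injective hc
      exact absurd this (by decide)
  revert h02
  simp [pathGraph_adj]

lemma isCograph_bot {α : Type*} : IsCograph (⊥ : SimpleGraph α) := by
  have := (isCograph_top (α := α)).compl
  rwa [compl_top] at this

lemma gJoin_notAdj_same_side {α β : Type*} {G : SimpleGraph α} {H : SimpleGraph β}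
    {u v : α ⊕ β} (h : ¬ (gJoin G H).Adj u v) (hne : u ≠ v) : u.isLeft = v.isLeft := by
  rcases u with a | a <;> rcases v with b | b <;> simp_all [gJoin]

lemma IsCograph.join {α β : Type*} {G : SimpleGraph α} {H : SimpleGraph β}
    (hG : IsCograph G) (hH : IsCograph H) : IsCograph (gJoin G H) := by
  constructor
  intro f
  -- all vertices on the same side
  have key : ∀ i j : Fin 4, ¬ (pathGraph 4).Adj i j → i ≠ j →
      (f i).isLeft = (f j).isLeft := by
    intro i j hadj hne
    exact gJoin_notAdj_same_side (fun hc => hadj (f.map_adj_iff.mp hc)) (fun hc => hne (f.injective hc))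
  have h02 := key 0 2 (by simp only [pathGraph_adj]; decide) (by decide)
  have h03 := key 0 3 (by simp only [pathGraph_adj]; decide) (by decide)
  have h13 := key 1 3 (by simp only [pathGraph_adj]; decide) (by decide)
  have hall : ∀ i : Fin 4, (f i).isLeft = (f 0).isLeft := fun i =>
    match i with
    | ⟨0, _⟩ => rfl
    | ⟨1, _⟩ => by show (f 1).isLeft = (f 0).isLeft; rw [h13, ← h03]
    | ⟨2, _⟩ => h02.symm
    | ⟨3, _⟩ => h03.symm
  rcases hL : (f 0).isLeft with _ | _
  · -- all on the right
    have hr : ∀ i : Fin 4, ∃ b, f i = Sum.inr b := by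
      intro i
      have := hall i
      rw [hL] at this
      rcases hfi : f i with a | b
      · rw [hfi] at this; simp at this
      · exact ⟨b, rfl⟩
    choose g hg using hr
    refine hH.elim ⟨⟨g, ?_⟩, ?_⟩
    · intro i j hij
      apply f.injective
      rw [hg i, hg j, hij]
    · intro i j
      have : (gJoin G H).Adj (f i) (f j) ↔ H.Adj (g i) (g j) := by
        rw [hg i, hg j]; simp [gJoin]
      show H.Adj (g i) (g j) ↔ _
      rw [← this]
      exact f.map_adj_iff
  · -- all on the left
    have hr : ∀ i : Fin 4, ∃ b, f i = Sum.inl b := by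
      intro i
      have := hall i
      rw [hL] at this
      rcases hfi : f i with a | b
      · exact ⟨a, rfl⟩
      · rw [hfi] at this; simp at this
    choose g hg using hr
    refine hG.elim ⟨⟨g, ?_⟩, ?_⟩
    · intro i j hij
      apply f.injective
      rw [hg i, hg j, hij]
    · intro i j
      have : (gJoin G H).Adj (f i) (f j) ↔ G.Adj (g i) (g j) := by
        rw [hg i, hg j]; simp [gJoin]
      show G.Adj (g i) (g j) ↔ _
      rw [← this]
      exact f.map_adj_iff

lemma IsCograph.gsum {α β : Type*} {G : SimpleGraph α} {H : SimpleGraph β}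
    (hG : IsCograph G) (hH : IsCograph H) : IsCograph (gSum G H) := by
  rw [gSum_eq]
  exact (hG.compl.join hH.compl).compl

/-! ### Regularity -/

def Reg {α : Type*} (G : SimpleGraph α) (d : ℕ) : Prop :=
  ∀ v, Nat.card (G.neighborSet v) = d

lemma reg_of_iso {α β : Type*} {G : SimpleGraph α} {H : SimpleGraph β}
    (e : G ≃g H) {d : ℕ} (h : Reg G d) : Reg H d := by
  intro v
  have : H.neighborSet v = H.neighborSet (e (e.symm v)) := by simp
  rw [this, ← Nat.card_congr (e.mapNeighborSet (e.symm v))]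
  exact h _

lemma reg_compl {n : ℕ} {G : SimpleGraph (Fin n)} {d : ℕ} (h : Reg G d) (hd : d ≤ n - 1) :
    Reg Gᶜ (n - 1 - d) := by
  classical
  intro v
  have h1 : Nat.card (Gᶜ.neighborSet v) = Gᶜ.degree v := by
    rw [← card_neighborSet_eq_degree, Nat.card_eq_fintype_card]
  have h2 : Nat.card (G.neighborSet v) = G.degree v := by
    rw [← card_neighborSet_eq_degree, Nat.card_eq_fintype_card]
  rw [h1, degree_compl, Fintype.card_fin, ← h2, h v]

lemma reg_gsum {α β : Type*} {G : SimpleGraph α} {H : SimpleGraph β} {d : ℕ}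
    (hG : Reg G d) (hH : Reg H d) : Reg (gSum G H) d := by
  rintro (a | a)
  · have : (gSum G H).neighborSet (Sum.inl a) = Sum.inl '' (G.neighborSet a) := by
      ext x
      rcases x with b | b <;> simp [gSum, neighborSet, mem_neighborSet]
    rw [this, Nat.card_image_of_injective Sum.inl_injective]
    exact hG a
  · have : (gSum G H).neighborSet (Sum.inr a) = Sum.inr '' (H.neighborSet a) := by
      ext x
      rcases x with b | b <;> simp [gSum, neighborSet, mem_neighborSet]
    rw [this, Nat.card_image_of_injective Sum.inr_injective]
    exact hH a

lemma reg_top {n : ℕ} : Reg (⊤ : SimpleGraph (Fin n)) (n - 1) := by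
  classical
  intro v
  have h1 : Nat.card ((⊤ : SimpleGraph (Fin n)).neighborSet v)
      = (⊤ : SimpleGraph (Fin n)).degree v := by
    rw [← card_neighborSet_eq_degree, Nat.card_eq_fintype_card]
  rw [h1, complete_graph_degree, Fintype.card_fin]

/-- Transport a graph on a type equivalent to `Fin n` to one on `Fin n`. -/
lemma transport {α : Type*} (G : SimpleGraph α) {n : ℕ} (e : α ≃ Fin n)
    (hc : IsCograph G) {d : ℕ} (hr : Reg G d) :
    ∃ G' : SimpleGraph (Fin n), IsCograph G' ∧ Reg G' d := by
  let G' := G.map e.toEmbedding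
  have iso : G ≃g G' := by
    refine ⟨e, ?_⟩
    intro a b
    show (G.map e.toEmbedding).Adj (e a) (e b) ↔ G.Adj a b
    rw [SimpleGraph.map_adj]
    constructor
    · rintro ⟨u, v, h, hu, hv⟩
      have hu' : u = a := e.toEmbedding.injective (by simpa using hu)
      have hv' : v = b := e.toEmbedding.injective (by simpa using hv)
      rwa [hu', hv'] at h
    · intro h; exact ⟨a, b, h, by simp, by simp⟩
  exact ⟨G', isCograph_of_iso iso hc, reg_of_iso iso hr⟩

/-! ### The main construction -/

lemma main_aux : ∀ N n d : ℕ, n * n + d ≤ N → Even n → d < n →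
    ∃ G : SimpleGraph (Fin n), IsCograph G ∧ Reg G d := by
  intro N
  induction N with
  | zero => intro n d h _ hd; nlinarith
  | succ N ih =>
    intro n d hN hn hd
    by_cases h2 : n ≤ 2 * d
    · -- complement case
      obtain ⟨G', hc, hr⟩ := ih n (n - 1 - d) (by omega) hn (by omega)
      refine ⟨G'ᶜ, hc.compl, ?_⟩
      have := reg_compl hr (d := n - 1 - d) (by omega)
      have heq : n - 1 - (n - 1 - d) = d := by omega
      rwa [heq] at this
    · obtain ⟨m, hm⟩ := hn
      by_cases h3 : n = 2 * d + 2
      · -- two disjoint cliques K_{d+1}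
        have key : ∃ G : SimpleGraph (Fin (d+1) ⊕ Fin (d+1)), IsCograph G ∧ Reg G d := by
          refine ⟨gSum ⊤ ⊤, isCograph_top.gsum isCograph_top, ?_⟩
          have := reg_gsum (reg_top (n := d+1)) (reg_top (n := d+1))
          simpa using this
        obtain ⟨G, hc, hr⟩ := key
        have e : (Fin (d+1) ⊕ Fin (d+1)) ≃ Fin n := by
          refine finSumFinEquiv.trans (finCongr (by omega))
        exact transport G e hc hr
      · -- split off a small even piece
        have hn4 : 2 * d + 4 ≤ n := by omega
        set p := if Even d then d + 2 else d + 1 with hp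
        have hpe : Even p := by
          rcases Nat.even_or_odd d with h | h
          · simpa [hp, h] using (by exact h.add (by decide) : Even (d + 2))
          · simp [hp, Nat.not_even_iff_odd.mpr h]
            exact h.add_one
        have hdp : d < p := by rcases Nat.even_or_odd d with h | h <;> simp [hp, h, Nat.not_even_iff_odd.mpr] <;> omega
        have hpn : p ≤ d + 2 := by rcases Nat.even_or_odd d with h | h <;> simp [hp, h, Nat.not_even_iff_odd.mpr] <;> omega
        set q := n - p with hq
        have hqe : Even q := by
          obtain ⟨a, ha⟩ := hpe
          refine ⟨m - a, by omega⟩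
        have hdq : d < q := by omega
        have hpl : p < n := by omega
        have hql : q < n := by omega
        have hp2 : p * p < n * n := Nat.mul_lt_mul'' hpl hpl
        have hq2 : q * q < n * n := Nat.mul_lt_mul'' hql hql
        obtain ⟨G1, hc1, hr1⟩ := ih p d (by omega) hpe hdp
        obtain ⟨G2, hc2, hr2⟩ := ih q d (by omega) hqe hdq
        have e : (Fin p ⊕ Fin q) ≃ Fin n := finSumFinEquiv.trans (finCongr (by omega))
        exact transport (gSum G1 G2) e (hc1.gsum hc2) (reg_gsum hr1 hr2)

theorem regular_cograph_even (n d : ℕ) (hn : Even n) (hd : d < n) :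
    ∃ G : SimpleGraph (Fin n), IsCograph G ∧ ∀ v : Fin n, Nat.card (G.neighborSet v) = d := by
  obtain ⟨G, hc, hr⟩ := main_aux (n * n + d) n d le_rfl hn hd
  exact ⟨G, hc, hr⟩
end
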